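/- Let Ψ be an infinite set and U a subgroup of S_Ψ containing the pointwise stabilizer S_{Ψ|T₀} of some finite subset T₀ ⊆ Ψ. Then there exists a unique finite subset T ⊆ Ψ such that S_{Ψ|T} ⊆ U ⊆ S_{Ψ,T}, where S_{Ψ,T} is the setwise stabilizer of T; moreover, for this T, S_{Ψ|T} is a normal subgroup of finite index in U. -/

import Mathlib

/-- The pointwise stabilizer `S_{Ψ|T}` of a set `T ⊆ Ψ` in the symmetric group
`S_Ψ`. -/
def pointwiseStabilizer {Ψ : Type} (T : Set Ψ) : Subgroup (Equiv.Perm Ψ) where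
  carrier := {g : Equiv.Perm Ψ | ∀ t ∈ T, g t = t}
  one_mem' := fun t _ => rfl
  mul_mem' := fun {a b} ha hb t ht => by
    simp only [Equiv.Perm.mul_apply, hb t ht, ha t ht]
  inv_mem' := fun {a} ha t ht => by
    have := ha t ht
    exact a.injective (by simpa using this.symm)

/-- The setwise stabilizer `S_{Ψ,T}` of a finite set `T ⊆ Ψ` in the symmetric
group `S_Ψ`. -/
def setwiseStabilizer {Ψ : Type} [DecidableEq Ψ] (T : Finset Ψ) :
    Subgroup (Equiv.Perm Ψ) where
  carrier := {g : Equiv.Perm Ψ | T.image g = T}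
  one_mem' := by simp
  mul_mem' := fun {a b} ha hb => by
    have : T.image (⇑(a * b)) = (T.image b).image a := by
      rw [Finset.image_image]; rfl
    simp only [Set.mem_setOf_eq] at *
    rw [this, hb, ha]
  inv_mem' := fun {a} ha => by
    simp only [Set.mem_setOf_eq] at *
    have h2 : T.image (⇑a⁻¹ ∘ ⇑a) = T := by
      have hid : (⇑a⁻¹ ∘ ⇑a) = id := by funext x; simp
      rw [hid, Finset.image_id]
    calc T.image ⇑a⁻¹ = (T.image ⇑a).image ⇑a⁻¹ := by rw [ha]
    _ = T := by rw [Finset.image_image]; exact h2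

section Helpers
set_option linter.unusedSectionVars false

open Equiv

variable {Ψ : Type} [Infinite Ψ] [DecidableEq Ψ]

lemma mem_pointwiseStabilizer {T : Set Ψ} {g : Equiv.Perm Ψ} :
    g ∈ pointwiseStabilizer T ↔ ∀ t ∈ T, g t = t := Iff.rfl

lemma mem_setwiseStabilizer {T : Finset Ψ} {g : Equiv.Perm Ψ} :
    g ∈ setwiseStabilizer T ↔ T.image g = T := Iff.rfl

lemma pointwiseStabilizer_antitone {T T' : Set Ψ} (h : T ⊆ T') :
    pointwiseStabilizer T' ≤ pointwiseStabilizer T :=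
  fun _ hg t ht => hg t (h ht)

lemma mem_of_mem_setwise {T : Finset Ψ} {g : Equiv.Perm Ψ}
    (hg : g ∈ setwiseStabilizer T) {t : Ψ} (ht : t ∈ T) : g t ∈ T := by
  rw [mem_setwiseStabilizer] at hg
  rw [← hg]
  exact Finset.mem_image_of_mem _ ht

lemma inv_mem_of_mem_setwise {T : Finset Ψ} {g : Equiv.Perm Ψ}
    (hg : g ∈ setwiseStabilizer T) {t : Ψ} (ht : t ∈ T) : g⁻¹ t ∈ T :=
  mem_of_mem_setwise ((setwiseStabilizer T).inv_mem hg) ht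

/-- The key step: if the pointwise stabilizer of `B` lies in `U` and some element of
`U` moves some `x ∈ B` out of `B`, then the pointwise stabilizer of `B.erase x` also
lies in `U`. -/
lemma erase_step {U : Subgroup (Equiv.Perm Ψ)} {B : Finset Ψ} {x : Ψ}
    (hB : pointwiseStabilizer (B : Set Ψ) ≤ U)
    {u : Equiv.Perm Ψ} (hu : u ∈ U) (hux : u x ∉ B) :
    pointwiseStabilizer ((B.erase x : Finset Ψ) : Set Ψ) ≤ U := by
  -- construct v ∈ U fixing B.erase x pointwise with v x ≠ x
  set C : Finset Ψ := B ∪ (B.erase x).image u with hC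
  have huxC : u x ∉ C := by
    simp only [hC, Finset.mem_union, Finset.mem_image, not_or]
    refine ⟨hux, ?_⟩
    rintro ⟨b, hb, hbu⟩
    exact (Finset.mem_erase.mp hb).1 (u.injective hbu)
  obtain ⟨w, hw⟩ := Infinite.exists_notMem_finset (insert (u x) C)
  have hwux : w ≠ u x := fun h => hw (h ▸ Finset.mem_insert_self _ _)
  have hwC : w ∉ C := fun h => hw (Finset.mem_insert_of_mem h)
  set s : Equiv.Perm Ψ := Equiv.swap (u x) w with hs
  have hsC : ∀ c ∈ C, s c = c := by
    intro c hc
    exact Equiv.swap_apply_of_ne_of_ne (fun h => huxC (h ▸ hc)) (fun h => hwC (h ▸ hc))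
  have hsU : s ∈ U := by
    apply hB
    intro t ht
    exact hsC t (Finset.mem_union_left _ ht)
  set v : Equiv.Perm Ψ := u⁻¹ * s * u with hv
  have hvU : v ∈ U := U.mul_mem (U.mul_mem (U.inv_mem hu) hsU) hu
  have hvfix : ∀ b ∈ B.erase x, v b = b := by
    intro b hb
    have : s (u b) = u b := hsC _ (Finset.mem_union_right _ (Finset.mem_image_of_mem _ hb))
    simp [hv, Equiv.Perm.mul_apply, this]
  have hvx : v x ≠ x := by
    have hvw : v x = u⁻¹ w := by
      simp only [hv, Equiv.Perm.mul_apply, hs, Equiv.swap_apply_left]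
    rw [hvw]
    intro h
    have := congrArg u h
    simp only [Equiv.Perm.inv_def, Equiv.apply_symm_apply] at this
    exact hwux this
  -- now Lemma A
  intro g hg
  have hgfix : ∀ b ∈ B.erase x, g b = b := fun b hb => hg b (Finset.mem_coe.mpr hb)
  by_cases hz : g x = x
  · apply hB
    intro t ht
    rcases eq_or_ne t x with rfl | htx
    · exact hz
    · exact hgfix t (Finset.mem_erase.mpr ⟨htx, ht⟩)
  · set y := v x with hy
    set z := g x with hz'
    have hyx : y ≠ x := hvx
    have hyE : y ∉ B.erase x := fun h => hyx (v.injective ((hvfix y h).trans hy))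
    have hzE : z ∉ B.erase x := by
      intro h
      have hzx : z = x := g.injective ((hgfix z h).trans hz')
      exact hz (hz'.symm.trans hzx)
    set s2 : Equiv.Perm Ψ := Equiv.swap y z with hs2
    have hs2B : ∀ b ∈ B, s2 b = b := by
      intro b hb
      rcases eq_or_ne b x with rfl | hbx
      · exact Equiv.swap_apply_of_ne_of_ne (Ne.symm hyx) (Ne.symm hz)
      · have hbE : b ∈ B.erase x := Finset.mem_erase.mpr ⟨hbx, hb⟩
        exact Equiv.swap_apply_of_ne_of_ne (fun h => hyE (h ▸ hbE)) (fun h => hzE (h ▸ hbE))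
    have hs2U : s2 ∈ U := hB (fun t ht => hs2B t ht)
    set h2 : Equiv.Perm Ψ := s2 * v with hh2
    have hh2U : h2 ∈ U := U.mul_mem hs2U hvU
    have hkey : h2⁻¹ * g ∈ U := by
      apply hB
      intro t ht
      rcases eq_or_ne t x with rfl | htx
      · have h1 : h2 t = g t := by
          simp only [hh2, Equiv.Perm.mul_apply, ← hy, ← hz']
          exact Equiv.swap_apply_left _ _
        simp [Equiv.Perm.mul_apply, ← h1]
      · have htE : t ∈ B.erase x := Finset.mem_erase.mpr ⟨htx, ht⟩
        have h1 : h2 t = t := by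
          simp only [hh2, Equiv.Perm.mul_apply, hvfix t htE]
          exact hs2B t ht
        rw [Equiv.Perm.mul_apply, hgfix t htE]
        exact h2.injective (by rw [Equiv.Perm.inv_def, Equiv.apply_symm_apply, h1])
    have : g = h2 * (h2⁻¹ * g) := by group
    rw [this]
    exact U.mul_mem hh2U hkey

/-- Existence of `T`. -/
lemma existsBetweenT {U : Subgroup (Equiv.Perm Ψ)} :
    ∀ B : Finset Ψ, pointwiseStabilizer (B : Set Ψ) ≤ U →
      ∃ T : Finset Ψ, pointwiseStabilizer (T : Set Ψ) ≤ U ∧ U ≤ setwiseStabilizer T := by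
  intro B
  induction B using Finset.strongInduction with
  | _ B ih =>
    intro hB
    by_cases hc : ∀ u ∈ U, ∀ t ∈ B, u t ∈ B
    · refine ⟨B, hB, ?_⟩
      intro u hu
      rw [mem_setwiseStabilizer]
      apply Finset.eq_of_subset_of_card_le
      · intro y hy
        obtain ⟨b, hb, rfl⟩ := Finset.mem_image.mp hy
        exact hc u hu b hb
      · rw [Finset.card_image_of_injective _ u.injective]
    · push_neg at hc
      obtain ⟨u, hu, x, hx, hux⟩ := hc
      exact ih (B.erase x) (Finset.erase_ssubset hx) (erase_step hB hu hux)


lemma subset_of_between {U : Subgroup (Equiv.Perm Ψ)} {T T' : Finset Ψ}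
    (h1 : pointwiseStabilizer (T : Set Ψ) ≤ U) (h2' : U ≤ setwiseStabilizer T') :
    T' ⊆ T := by
  intro x hx'
  by_contra hx
  obtain ⟨y, hy⟩ := Infinite.exists_notMem_finset (T ∪ T')
  have hyT : y ∉ T := fun h => hy (Finset.mem_union_left _ h)
  have hyT' : y ∉ T' := fun h => hy (Finset.mem_union_right _ h)
  have hsU : Equiv.swap x y ∈ U := by
    apply h1
    intro t ht
    exact Equiv.swap_apply_of_ne_of_ne (fun h => hx (h ▸ ht)) (fun h => hyT (h ▸ ht))
  have := mem_of_mem_setwise (h2' hsU) hx'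
  rw [Equiv.swap_apply_left] at this
  exact hyT' this

end Helpers


/-- **Description of the open subgroups of `S_Ψ`.**  Let `U` be a subgroup of
`S_Ψ` containing the pointwise stabilizer of some finite set `T₀` (`U` is
open).  Then there is a unique finite `T ⊆ Ψ` with
`S_{Ψ|T} ≤ U ≤ S_{Ψ,T}`; moreover for this `T`, the subgroup `S_{Ψ|T}` is
normal in `U` of finite index (finite index expressed by
`relindex ≠ 0`). -/
theorem open_subgroup_between_pointwise_and_setwise_stabilizer
    (Ψ : Type) [Infinite Ψ] [DecidableEq Ψ]
    (U : Subgroup (Equiv.Perm Ψ))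
    (hopen : ∃ T₀ : Finset Ψ, pointwiseStabilizer (T₀ : Set Ψ) ≤ U) :
    ∃ T : Finset Ψ,
      (pointwiseStabilizer (T : Set Ψ) ≤ U ∧ U ≤ setwiseStabilizer T) ∧
      (∀ T' : Finset Ψ,
        pointwiseStabilizer (T' : Set Ψ) ≤ U ∧ U ≤ setwiseStabilizer T' → T' = T) ∧
      (((pointwiseStabilizer (T : Set Ψ)).subgroupOf U).Normal) ∧
      (pointwiseStabilizer (T : Set Ψ)).relIndex U ≠ 0 := by
  obtain ⟨T₀, hT₀⟩ := hopen
  obtain ⟨T, hT1, hT2⟩ := existsBetweenT T₀ hT₀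
  have hmem : ∀ (u : U) (x : Ψ), x ∈ T ↔ (u : Equiv.Perm Ψ) x ∈ T := by
    intro u x
    constructor
    · exact fun h => mem_of_mem_setwise (hT2 u.2) h
    · intro h
      have h2 := inv_mem_of_mem_setwise (hT2 u.2) h
      simpa using h2
  refine ⟨T, ⟨hT1, hT2⟩, ?_, ?_, ?_⟩
  · intro T' ⟨h1', h2'⟩
    exact Finset.Subset.antisymm (subset_of_between hT1 h2') (subset_of_between h1' hT2)
  · constructor
    intro n hn u
    rw [Subgroup.mem_subgroupOf] at *
    intro t ht
    have h1 : (u : Equiv.Perm Ψ)⁻¹ t ∈ T := inv_mem_of_mem_setwise (hT2 u.2) ht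
    have h2 : (n : Equiv.Perm Ψ) ((u : Equiv.Perm Ψ)⁻¹ t) = (u : Equiv.Perm Ψ)⁻¹ t :=
      hn _ h1
    simp only [Equiv.Perm.inv_def] at h2
    simp [Equiv.Perm.mul_apply, h2]
  · set φ : U →* Equiv.Perm {x // x ∈ T} :=
      { toFun := fun u => Equiv.Perm.subtypePerm u.1 (fun x => (hmem u x).symm)
        map_one' := by ext x; simp
        map_mul' := by intro a b; ext x; simp; rfl } with hφ
    have hker : φ.ker = (pointwiseStabilizer (T : Set Ψ)).subgroupOf U := by
      ext u
      rw [MonoidHom.mem_ker, Subgroup.mem_subgroupOf]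
      constructor
      · intro h t ht
        have := Equiv.ext_iff.mp h ⟨t, ht⟩
        exact Subtype.ext_iff.mp this
      · intro h
        ext ⟨t, ht⟩
        exact Subtype.ext_iff.mp (Subtype.ext (h t ht))
    have hre : (pointwiseStabilizer (T : Set Ψ)).relIndex U = φ.ker.index := by
      rw [Subgroup.relIndex, hker]
    rw [hre, Subgroup.index_ker]
    haveI : Finite φ.range := inferInstance
    exact Nat.card_ne_zero.mpr ⟨⟨1, 1, map_one φ⟩, inferInstance⟩
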